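/- Let N be a connected Lie subgroup of GL(n,ℝ) whose Lie algebra consists of nilpotent matrices. Then every element of N is a unipotent matrix, and the exponential map from the Lie algebra of N to N is surjective. -/

import Mathlib

set_option linter.unusedSectionVars false

attribute [local instance 100] LieRing.ofAssociativeRing
set_option linter.unnecessarySimpa false
open Polynomial Finset

noncomputable section BCH

variable {S : Type*} [Ring S] [Algebra ℝ S]

/-- Truncated exponential. -/
def texp (M : ℕ) (a : S) : S := ∑ i ∈ range M, (i.factorial : ℝ)⁻¹ • a ^ i

/-- Iterated commutator. -/
def adIt (w : S) : ℕ → S → S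
  | 0, z => z
  | (j+1), z => w * adIt w j z - adIt w j z * w

@[simp] lemma adIt_zero (w z : S) : adIt w 0 z = z := rfl
lemma adIt_succ (w : S) (j : ℕ) (z : S) :
    adIt w (j+1) z = w * adIt w j z - adIt w j z * w := rfl

lemma mul_left_mem_span {w x : S} {s : Set S} {T : Submodule ℝ S} (h : ∀ u ∈ s, w * u ∈ T)
    (hx : x ∈ Submodule.span ℝ s) : w * x ∈ T := by
  induction hx using Submodule.span_induction with
  | mem u hu => exact h u hu
  | zero => simpa using Submodule.zero_mem _
  | add u v _ _ hu hv => rw [mul_add]; exact Submodule.add_mem _ hu hv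
  | smul r u _ hu => rw [mul_smul_comm]; exact Submodule.smul_mem _ _ hu

lemma mul_right_mem_span {w x : S} {s : Set S} {T : Submodule ℝ S} (h : ∀ u ∈ s, u * w ∈ T)
    (hx : x ∈ Submodule.span ℝ s) : x * w ∈ T := by
  induction hx using Submodule.span_induction with
  | mem u hu => exact h u hu
  | zero => simpa using Submodule.zero_mem _
  | add u v _ _ hu hv => rw [add_mul]; exact Submodule.add_mem _ hu hv
  | smul r u _ hu => rw [smul_mul_assoc]; exact Submodule.smul_mem _ _ hu

lemma adIt_mem_span (w z : S) (m : ℕ) :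
    adIt w m z ∈ Submodule.span ℝ {u : S | ∃ p q, p + q = m ∧ u = w ^ p * z * w ^ q} := by
  induction m with
  | zero => exact Submodule.subset_span ⟨0, 0, rfl, by simp⟩
  | succ m ih =>
    rw [adIt_succ]
    refine sub_mem ?_ ?_
    · refine mul_left_mem_span (fun u hu => ?_) ih
      obtain ⟨p, q, hpq, rfl⟩ := hu
      exact Submodule.subset_span ⟨p+1, q, by omega, by rw [pow_succ']; noncomm_ring⟩
    · refine mul_right_mem_span (fun u hu => ?_) ih
      obtain ⟨p, q, hpq, rfl⟩ := hu
      exact Submodule.subset_span ⟨p, q+1, by omega, by rw [pow_succ]; noncomm_ring⟩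

/-- `adIt w m z` vanishes when `w` is nilpotent of degree `d` and `m ≥ 2 d - 1`. -/
lemma adIt_eq_zero {w : S} {d : ℕ} (hw : w ^ d = 0) (z : S) {m : ℕ} (hm : 2 * d ≤ m + 1) :
    adIt w m z = 0 := by
  have h : Submodule.span ℝ {u : S | ∃ p q, p + q = m ∧ u = w ^ p * z * w ^ q} ≤ ⊥ := by
    rw [Submodule.span_le]
    rintro u ⟨p, q, hpq, rfl⟩
    have : w ^ p = 0 ∨ w ^ q = 0 := by
      rcases le_or_gt d p with h' | h'
      · exact Or.inl (pow_eq_zero_of_le h' hw)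
      · exact Or.inr (pow_eq_zero_of_le (by omega) hw)
    rcases this with h' | h' <;> simp [h']
  simpa using h (adIt_mem_span w z m)

section Poly

lemma X_mul_C_pow (w : S) (i : ℕ) : (X * C w) ^ i = C (w ^ i) * X ^ i := by
  induction i with
  | zero => simp
  | succ i ih =>
    rw [pow_succ, ih, mul_assoc]
    have h : X ^ i * (X * C w) = C w * X ^ (i+1) := by rw [← mul_assoc, ← pow_succ, X_pow_mul]
    rw [h, ← mul_assoc, ← C_mul, ← pow_succ]

lemma coeff_texp_XC (M : ℕ) (w : S) (m : ℕ) :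
    (texp M (X * C w)).coeff m = if m < M then (m.factorial : ℝ)⁻¹ • w ^ m else 0 := by
  rw [texp, finset_sum_coeff]
  have : ∀ i ∈ range M, ((i.factorial : ℝ)⁻¹ • (X * C w) ^ i).coeff m
      = if i = m then (i.factorial : ℝ)⁻¹ • w ^ i else 0 := by
    intro i _
    rw [coeff_smul, X_mul_C_pow, coeff_C_mul, coeff_X_pow]
    split_ifs with h h2 h2
    · rw [mul_one]
    · exact absurd h.symm h2
    · exact absurd h2.symm h
    · rw [mul_zero, smul_zero]
  rw [Finset.sum_congr rfl this, Finset.sum_ite_eq' (range M) m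
    (fun i => (i.factorial : ℝ)⁻¹ • w ^ i)]
  by_cases h : m < M <;> simp [h]

lemma texp_XC_coeff_zero (M : ℕ) (hM : 0 < M) (w : S) :
    (texp M (X * C w)).coeff 0 = 1 := by
  rw [coeff_texp_XC, if_pos hM]; simp

lemma cast_succ_eq_algebraMap (m : ℕ) :
    ((m : S) + 1) = algebraMap ℝ S ((m + 1 : ℕ) : ℝ) := by
  push_cast [map_natCast, map_one, map_add]
  simp

lemma mul_cast_succ_eq_smul (a : S) (m : ℕ) :
    a * ((m : S) + 1) = ((m + 1 : ℕ) : ℝ) • a := by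
  rw [cast_succ_eq_algebraMap (S := S) m, ← Algebra.commutes, Algebra.smul_def]

lemma deriv_texp {w : S} {d M : ℕ} (hw : w ^ d = 0) (hd : d < M) :
    derivative (texp M (X * C w)) = C w * texp M (X * C w) := by
  ext m
  rw [coeff_derivative, coeff_C_mul, coeff_texp_XC, coeff_texp_XC, mul_cast_succ_eq_smul]
  rcases lt_trichotomy (m + 1) M with h | h | h
  · rw [if_pos h, if_pos (by omega)]
    rw [smul_comm, mul_smul_comm, smul_smul, ← pow_succ']
    congr 1
    rw [Nat.factorial_succ]
    push_cast
    rw [mul_inv]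
    field_simp
  · rw [if_neg (by omega), if_pos (by omega)]
    have : w ^ m = 0 := pow_eq_zero_of_le (by omega) hw
    simp [this]
  · rw [if_neg (by omega), if_neg (by omega)]
    simp

end Poly

lemma alt_sum_choose {m : ℕ} (hm : m ≠ 0) :
    ∑ k ∈ range (m+1), ((-1:ℝ)) ^ (m - k) * (m.choose k) = 0 := by
  have h := add_pow (1 : ℝ) (-1) m
  simp only [add_neg_cancel, one_pow, one_mul, zero_pow hm] at h
  rw [← h]

lemma texp_term_mul (w : S) (i j : ℕ) :
    ((i.factorial : ℝ)⁻¹ • w ^ i) * ((j.factorial : ℝ)⁻¹ • (-w) ^ j)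
      = ((-1:ℝ) ^ j * ((i.factorial : ℝ)⁻¹ * (j.factorial : ℝ)⁻¹)) • w ^ (i + j) := by
  have h1 : (-w) ^ j = ((-1:ℝ) ^ j) • w ^ j := by
    rw [neg_pow, show ((-1:S)) = algebraMap ℝ S (-1) by simp, ← map_pow, ← Algebra.smul_def]
  rw [h1, smul_smul, smul_mul_smul_comm, pow_add,
    show (i.factorial:ℝ)⁻¹ * ((j.factorial:ℝ)⁻¹ * (-1:ℝ)^j)
      = (-1:ℝ)^j * ((i.factorial:ℝ)⁻¹ * (j.factorial:ℝ)⁻¹) from by ring]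

lemma inv_scalar_sum {m : ℕ} (hm : m ≠ 0) :
    ∑ ij ∈ Finset.HasAntidiagonal.antidiagonal m, ((-1:ℝ) ^ ij.2 * ((ij.1.factorial : ℝ)⁻¹ * (ij.2.factorial : ℝ)⁻¹)) = 0 := by
  rw [Finset.Nat.sum_antidiagonal_eq_sum_range_succ_mk]
  have h : ∀ k ∈ range (m+1), ((-1:ℝ) ^ (m - k) * (((k.factorial : ℝ))⁻¹ * (((m - k).factorial : ℝ))⁻¹))
      = (m.factorial : ℝ)⁻¹ * ((-1:ℝ) ^ (m-k) * (m.choose k)) := by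
    intro k hk
    rw [mem_range] at hk
    have hkm : k ≤ m := by omega
    rw [Nat.cast_choose ℝ hkm]
    have h1 : (k.factorial : ℝ) ≠ 0 := Nat.cast_ne_zero.2 k.factorial_ne_zero
    have h2 : ((m - k).factorial : ℝ) ≠ 0 := Nat.cast_ne_zero.2 (m - k).factorial_ne_zero
    have h3 : (m.factorial : ℝ) ≠ 0 := Nat.cast_ne_zero.2 m.factorial_ne_zero
    field_simp
  rw [Finset.sum_congr rfl h, ← Finset.mul_sum, alt_sum_choose hm, mul_zero]

/-- `e^{tw} e^{-tw} = 1` as truncated polynomials. -/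
lemma texp_XC_mul_texp_XC_neg {w : S} {d M : ℕ} (hw : w ^ d = 0) (hdM : d < M) :
    texp M (X * C w) * texp M (X * C (-w)) = 1 := by
  ext m
  rw [coeff_mul]
  rcases Nat.eq_zero_or_pos m with rfl | hm
  · rw [Finset.Nat.antidiagonal_zero, Finset.sum_singleton]
    rw [coeff_texp_XC, coeff_texp_XC, if_pos (by omega), if_pos (by omega)]
    simp
  have hterm : ∀ ij ∈ Finset.HasAntidiagonal.antidiagonal m,
      (texp M (X * C w)).coeff ij.1 * (texp M (X * C (-w))).coeff ij.2
      = if ij.1 < M ∧ ij.2 < M then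
          ((-1:ℝ) ^ ij.2 * ((ij.1.factorial : ℝ)⁻¹ * (ij.2.factorial : ℝ)⁻¹)) • w ^ m
        else 0 := by
    rintro ⟨i, j⟩ hij
    rw [Finset.HasAntidiagonal.mem_antidiagonal] at hij
    rw [coeff_texp_XC, coeff_texp_XC]
    by_cases hi : i < M
    · by_cases hj : j < M
      · rw [if_pos hi, if_pos hj, if_pos ⟨hi, hj⟩, texp_term_mul, hij]
      · rw [if_neg hj, mul_zero, if_neg (by tauto)]
    · rw [if_neg hi, zero_mul, if_neg (by tauto)]
  rw [Finset.sum_congr rfl hterm]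
  rcases lt_or_ge m M with hmM | hmM
  · have : ∀ ij ∈ Finset.HasAntidiagonal.antidiagonal m,
        (if ij.1 < M ∧ ij.2 < M then
          ((-1:ℝ) ^ ij.2 * ((ij.1.factorial : ℝ)⁻¹ * (ij.2.factorial : ℝ)⁻¹)) • w ^ m else 0)
        = ((-1:ℝ) ^ ij.2 * ((ij.1.factorial : ℝ)⁻¹ * (ij.2.factorial : ℝ)⁻¹)) • w ^ m := by
      rintro ⟨i, j⟩ hij
      rw [Finset.HasAntidiagonal.mem_antidiagonal] at hij
      rw [if_pos ⟨by omega, by omega⟩]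
    rw [Finset.sum_congr rfl this, ← Finset.sum_smul, inv_scalar_sum (by omega), zero_smul,
      coeff_one, if_neg (by omega)]
  · have hwm : w ^ m = 0 := pow_eq_zero_of_le (by omega) hw
    simp only [hwm, smul_zero, if_pos, ite_self, Finset.sum_const_zero, coeff_one]
    rw [if_neg (by omega)]

section Eval

/-- Evaluation of a polynomial at `1`, as a ring homomorphism. -/
def evalOne : Polynomial S →+* S :=
  eval₂RingHom' (RingHom.id S) 1 (fun a => Commute.one_right a)

@[simp] lemma evalOne_C (a : S) : evalOne (C a) = a := eval₂_C _ _
@[simp] lemma evalOne_X : evalOne (X : Polynomial S) = 1 := eval₂_X _ _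

lemma evalOne_smul (r : ℝ) (p : Polynomial S) : evalOne (r • p) = r • evalOne p := by
  have : evalOne (S := S) (r • p) = algebraMap ℝ S r * evalOne p := by
    have hsm : r • p = C (algebraMap ℝ S r) * p := by
      ext m
      rw [coeff_smul, coeff_C_mul, Algebra.smul_def]
    rw [hsm, map_mul, evalOne_C]
  rw [this, Algebra.smul_def]

lemma evalOne_texp (M : ℕ) (p : Polynomial S) : evalOne (texp M p) = texp M (evalOne p) := by
  simp only [texp, map_sum]
  refine Finset.sum_congr rfl fun i _ => ?_
  rw [evalOne_smul, map_pow]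

/-- `e^a e^{-a} = 1` for nilpotent `a` in any `ℝ`-algebra. -/
lemma texp_mul_texp_neg {a : S} {d M : ℕ} (ha : a ^ d = 0) (hdM : d < M) :
    texp M a * texp M (-a) = 1 := by
  have h := congrArg (evalOne (S := S)) (texp_XC_mul_texp_XC_neg ha hdM)
  rw [map_mul, map_one, evalOne_texp, evalOne_texp, map_mul, map_mul, evalOne_X, evalOne_C,
    evalOne_C, one_mul, one_mul] at h
  exact h

end Eval

lemma mul_natCast_eq_smul (a : S) (j : ℕ) : a * ((j : ℕ) : S) = ((j : ℕ) : ℝ) • a := by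
  rw [show ((j : ℕ) : S) = algebraMap ℝ S ((j : ℕ) : ℝ) by simp, ← Algebra.commutes,
    Algebra.smul_def]

lemma smul_cancel {r : ℝ} (hr : r ≠ 0) {a b : S} (h : r • a = r • b) : a = b := by
  have h2 := congrArg (fun z : S => r⁻¹ • z) h
  simpa [smul_smul, inv_mul_cancel₀ hr] using h2

/-- Uniqueness for linear coefficient recursions. -/
lemma poly_unique (Φ : Polynomial S → Polynomial S)
    (hΦ : ∀ p q : Polynomial S, ∀ m : ℕ,
      (∀ j, j ≤ m → p.coeff j = q.coeff j) → (Φ p).coeff m = (Φ q).coeff m)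
    {u v : Polynomial S} (hu : derivative u = Φ u) (hv : derivative v = Φ v)
    (h0 : u.coeff 0 = v.coeff 0) : u = v := by
  ext m
  induction m using Nat.strong_induction_on with
  | _ m ih =>
    match m with
    | 0 => exact h0
    | Nat.succ m =>
      have h1 : (derivative u).coeff m = (derivative v).coeff m := by
        rw [hu, hv]
        exact hΦ u v m (fun j hj => ih j (by omega))
      rw [coeff_derivative, coeff_derivative, mul_cast_succ_eq_smul, mul_cast_succ_eq_smul] at h1
      exact smul_cancel (by positivity) h1

section Jint

/-- Formal integration with zero constant term. -/
def Jint (q : Polynomial S) : Polynomial S :=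
  q.sum fun i a => C (((i+1 : ℕ) : ℝ)⁻¹ • a) * X ^ (i+1)

lemma coeff_Jint_zero (q : Polynomial S) : (Jint q).coeff 0 = 0 := by
  rw [Jint, Polynomial.sum, finset_sum_coeff]
  refine Finset.sum_eq_zero fun i _ => ?_
  rw [coeff_C_mul, coeff_X_pow, if_neg (by omega), mul_zero]

lemma coeff_Jint_succ (q : Polynomial S) (m : ℕ) :
    (Jint q).coeff (m+1) = (((m+1 : ℕ) : ℝ))⁻¹ • q.coeff m := by
  rw [Jint, Polynomial.sum, finset_sum_coeff]
  have h : ∀ i ∈ q.support, (C (((i+1 : ℕ) : ℝ)⁻¹ • q.coeff i) * X ^ (i+1)).coeff (m+1)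
      = if i = m then (((m+1 : ℕ) : ℝ))⁻¹ • q.coeff i else 0 := by
    intro i _
    rw [coeff_C_mul, coeff_X_pow]
    by_cases h : i = m
    · subst h; rw [if_pos rfl, if_pos rfl, mul_one]
    · rw [if_neg (by omega), if_neg h, mul_zero]
  rw [Finset.sum_congr rfl h, Finset.sum_ite_eq' q.support m]
  by_cases hm : m ∈ q.support
  · rw [if_pos hm]
  · rw [if_neg hm, Polynomial.notMem_support_iff.1 hm, smul_zero]

lemma derivative_Jint (q : Polynomial S) : derivative (Jint q) = q := by
  ext m
  rw [coeff_derivative, coeff_Jint_succ, mul_cast_succ_eq_smul, smul_smul,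
    mul_inv_cancel₀ (by positivity : ((m+1:ℕ):ℝ) ≠ 0), one_smul]

lemma eq_Jint_derivative {p : Polynomial S} (h0 : p.coeff 0 = 0) :
    p = Jint (derivative p) := by
  ext m
  match m with
  | 0 => rw [coeff_Jint_zero, h0]
  | Nat.succ m =>
    rw [coeff_Jint_succ, coeff_derivative, mul_cast_succ_eq_smul, smul_smul,
      inv_mul_cancel₀ (by positivity : ((m+1:ℕ):ℝ) ≠ 0), one_smul]

end Jint

lemma C_real_smul (r : ℝ) (a : S) : C (r • a) = r • (C a : Polynomial S) := by
  ext m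
  rw [coeff_smul, coeff_C, coeff_C]
  split_ifs <;> simp

lemma commute_C_texp {w v : S} (h : Commute w v) (M : ℕ) :
    Commute (C w) (texp M (X * C v)) := by
  have h1 : Commute (C w) (X * C v) :=
    Commute.mul_right (Polynomial.commute_X (C w)).symm (h.map (C : S →+* Polynomial S))
  exact Commute.sum_right _ _ _ fun i _ => (h1.pow_right i).smul_right _

lemma neg_pow_eq_zero {w : S} {d : ℕ} (hw : w ^ d = 0) : (-w) ^ d = 0 := by
  rw [neg_pow, hw, mul_zero]

/-- Conjugation formula: `e^{-tw} z e^{tw} = ∑ (-t)^j/j! (ad w)^j z`. -/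
lemma conj_texp {w : S} {d M : ℕ} (hw : w ^ d = 0) (hdM : 2*d + 2 ≤ M) (z : S) :
    texp M (X * C (-w)) * C z * texp M (X * C w)
      = ∑ j ∈ range M, ((-1:ℝ)^j * (j.factorial : ℝ)⁻¹) • (C (adIt w j z) * X ^ j) := by
  obtain ⟨M', rfl⟩ : ∃ M', M = M' + 1 := ⟨M - 1, by omega⟩
  have hdM' : d < M' + 1 := by omega
  have hnw : (-w) ^ d = 0 := neg_pow_eq_zero hw
  refine poly_unique (fun p => p * C w - C w * p) ?_ ?_ ?_ ?_
  · intro p q m hpq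
    rw [coeff_sub, coeff_sub, coeff_mul_C, coeff_mul_C, coeff_C_mul, coeff_C_mul,
      hpq m le_rfl]
  · -- derivative of LHS
    rw [derivative_mul, derivative_mul, deriv_texp hnw hdM', deriv_texp hw hdM',
      derivative_C, mul_zero, add_zero, map_neg]
    have hc : C w * texp (M'+1) (X * C w) = texp (M'+1) (X * C w) * C w :=
      (commute_C_texp (Commute.refl w) (M'+1)).eq
    rw [mul_assoc, mul_assoc, hc]
    noncomm_ring
  · -- derivative of RHS
    rw [derivative_sum]
    have h1 : ∀ j ∈ range (M'+1),
        derivative (((-1:ℝ)^j * (j.factorial : ℝ)⁻¹) • (C (adIt w j z) * X ^ j))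
        = ((-1:ℝ)^j * (j.factorial : ℝ)⁻¹ * j) • (C (adIt w j z) * X ^ (j-1)) := by
      intro j _
      rw [derivative_smul, derivative_mul, derivative_C, zero_mul, zero_add,
        derivative_X_pow, ← mul_assoc, ← map_mul, mul_natCast_eq_smul, C_real_smul,
        smul_mul_assoc, smul_smul]
    rw [Finset.sum_congr rfl h1]
    -- reindex : drop the j = 0 term
    rw [Finset.sum_range_succ']
    simp only [Nat.cast_zero, mul_zero, zero_smul, add_zero, pow_zero]
    -- RHS : bracket form
    have h2 : (∑ j ∈ range (M'+1), ((-1:ℝ)^j * (j.factorial : ℝ)⁻¹) • (C (adIt w j z) * X ^ j)) * C w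
        - C w * (∑ j ∈ range (M'+1), ((-1:ℝ)^j * (j.factorial : ℝ)⁻¹) • (C (adIt w j z) * X ^ j))
        = ∑ j ∈ range (M'+1), (-((-1:ℝ)^j * (j.factorial : ℝ)⁻¹)) • (C (adIt w (j+1) z) * X ^ j) := by
      rw [Finset.sum_mul, Finset.mul_sum, ← Finset.sum_sub_distrib]
      refine Finset.sum_congr rfl fun j _ => ?_
      rw [smul_mul_assoc, mul_smul_comm, ← smul_sub, neg_smul, ← smul_neg]
      congr 1
      rw [adIt_succ, map_sub, map_mul, map_mul,
        mul_assoc (C (adIt w j z)) (X ^ j), X_pow_mul]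
      noncomm_ring
    rw [h2, Finset.sum_range_succ]
    rw [adIt_eq_zero hw _ (by omega), map_zero, zero_mul, smul_zero, add_zero]
    refine Finset.sum_congr rfl fun j _ => ?_
    rw [Nat.add_sub_cancel]
    congr 1
    rw [Nat.factorial_succ, pow_succ]
    push_cast
    have h3 : (j.factorial : ℝ) ≠ 0 := Nat.cast_ne_zero.2 j.factorial_ne_zero
    field_simp
  · -- constant coefficients agree
    rw [mul_coeff_zero, mul_coeff_zero, texp_XC_coeff_zero _ (by omega),
      texp_XC_coeff_zero _ (by omega), coeff_C, if_pos rfl, one_mul, mul_one]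
    rw [finset_sum_coeff]
    have h4 : ∀ j ∈ range (M'+1), (((-1:ℝ)^j * (j.factorial : ℝ)⁻¹) • (C (adIt w j z) * X ^ j)).coeff 0
        = if j = 0 then z else 0 := by
      intro j _
      rw [coeff_smul, coeff_C_mul, coeff_X_pow]
      by_cases h : j = 0
      · subst h; simp
      · rw [if_neg (by omega), if_neg h, mul_zero, smul_zero]
    rw [Finset.sum_congr rfl h4, Finset.sum_ite_eq' (range (M'+1)) 0 (fun _ => z),
      if_pos (by simp)]

/-- Conjugation formula in any `ℝ`-algebra: `e^{-w} z e^{w} = ∑ (-1)^j/j! (ad w)^j z`. -/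
lemma conj_texp' {w : S} {d M : ℕ} (hw : w ^ d = 0) (hdM : 2*d + 2 ≤ M) (z : S) :
    texp M (-w) * z * texp M w
      = ∑ j ∈ range M, ((-1:ℝ)^j * (j.factorial : ℝ)⁻¹) • adIt w j z := by
  have h := congrArg (evalOne (S := S)) (conj_texp hw hdM z)
  rw [map_mul, map_mul, evalOne_texp, evalOne_texp, map_mul, map_mul, evalOne_X, evalOne_C,
    evalOne_C, one_mul, one_mul, evalOne_C, map_sum] at h
  rw [h]
  refine Finset.sum_congr rfl fun j _ => ?_
  rw [evalOne_smul, map_mul, evalOne_C, map_pow, evalOne_X, one_pow, mul_one]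

section Dexp

/-- Coefficientwise derivative on polynomials over a polynomial ring. -/
def Dtl (p : Polynomial (Polynomial S)) : Polynomial (Polynomial S) :=
  p.sum fun i a => C (derivative a) * X ^ i

lemma Dtl_coeff (p : Polynomial (Polynomial S)) (m : ℕ) :
    (Dtl p).coeff m = derivative (p.coeff m) := by
  rw [Dtl, Polynomial.sum, finset_sum_coeff]
  have h : ∀ i ∈ p.support, (C (derivative (p.coeff i)) * X ^ i).coeff m
      = if i = m then derivative (p.coeff i) else 0 := by
    intro i _
    rw [coeff_C_mul, coeff_X_pow]
    by_cases h : i = m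
    · subst h; rw [if_pos rfl, if_pos rfl, mul_one]
    · rw [if_neg (fun hh => h hh.symm), if_neg h, mul_zero]
  rw [Finset.sum_congr rfl h, Finset.sum_ite_eq' p.support m]
  by_cases hm : m ∈ p.support
  · rw [if_pos hm]
  · rw [if_neg hm, Polynomial.notMem_support_iff.1 hm, map_zero]

lemma Dtl_mul (u v : Polynomial (Polynomial S)) :
    Dtl (u * v) = Dtl u * v + u * Dtl v := by
  refine Polynomial.ext fun m => ?_
  rw [Dtl_coeff, coeff_mul, coeff_add, coeff_mul, coeff_mul,
    map_sum (derivative (R := S)) (fun ij : ℕ × ℕ => u.coeff ij.1 * v.coeff ij.2)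
      (Finset.HasAntidiagonal.antidiagonal m), ← Finset.sum_add_distrib]
  refine Finset.sum_congr rfl fun ij _ => ?_
  rw [derivative_mul, Dtl_coeff, Dtl_coeff]

lemma Dtl_C (a : Polynomial S) : Dtl (C a) = C (derivative a) := by
  refine Polynomial.ext fun m => ?_
  rw [Dtl_coeff, coeff_C, coeff_C]
  split_ifs <;> simp

lemma Dtl_derivative (p : Polynomial (Polynomial S)) :
    Dtl (derivative p) = derivative (Dtl p) := by
  refine Polynomial.ext fun m => ?_
  rw [Dtl_coeff, coeff_derivative, coeff_derivative, Dtl_coeff, derivative_mul]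
  have h : derivative ((m : Polynomial S) + 1) = 0 := by
    rw [derivative_add, derivative_one, derivative_natCast, add_zero]
  rw [h, mul_zero, add_zero]

lemma Dtl_coeff_zero (p : Polynomial (Polynomial S)) :
    (Dtl p).coeff 0 = derivative (p.coeff 0) := Dtl_coeff p 0

lemma evalOne_Dtl (p : Polynomial (Polynomial S)) :
    evalOne (Dtl p) = derivative (evalOne p) := by
  induction p using Polynomial.induction_on' with
  | add u v hu hv =>
    have hadd : Dtl (u + v) = Dtl u + Dtl v := by
      refine Polynomial.ext fun m => ?_
      rw [Dtl_coeff, coeff_add, coeff_add, Dtl_coeff, Dtl_coeff, derivative_add]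
    rw [hadd, map_add, map_add, derivative_add, hu, hv]
  | monomial i a =>
    rw [← C_mul_X_pow_eq_monomial]
    have hm : Dtl (C a * X ^ i) = C (derivative a) * X ^ i := by
      refine Polynomial.ext fun m => ?_
      rw [Dtl_coeff, coeff_C_mul, coeff_C_mul, coeff_X_pow]
      split_ifs <;> simp
    rw [hm, map_mul, map_mul, map_pow, evalOne_X, evalOne_C, evalOne_C, one_pow,
      mul_one, mul_one]

lemma Jint_sum {ι : Type*} (t : Finset ι) (f : ι → Polynomial S) :
    Jint (∑ j ∈ t, f j) = ∑ j ∈ t, Jint (f j) := by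
  ext m
  match m with
  | 0 =>
    rw [coeff_Jint_zero, finset_sum_coeff]
    exact (Finset.sum_eq_zero fun j _ => coeff_Jint_zero (f j)).symm
  | Nat.succ m =>
    rw [coeff_Jint_succ, finset_sum_coeff, finset_sum_coeff, Finset.smul_sum]
    exact Finset.sum_congr rfl fun j _ => (coeff_Jint_succ (f j) m).symm

lemma Jint_smul (r : ℝ) (p : Polynomial S) : Jint (r • p) = r • Jint p := by
  ext m
  match m with
  | 0 => rw [coeff_Jint_zero, coeff_smul, coeff_Jint_zero, smul_zero]
  | Nat.succ m => rw [coeff_Jint_succ, coeff_smul, coeff_smul, coeff_Jint_succ, smul_comm]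

lemma Jint_C_mul_X_pow (a : S) (j : ℕ) :
    Jint (C a * X ^ j) = (((j+1 : ℕ) : ℝ))⁻¹ • (C a * X ^ (j+1)) := by
  ext m
  match m with
  | 0 =>
    rw [coeff_Jint_zero, coeff_smul, coeff_C_mul, coeff_X_pow, if_neg (by omega), mul_zero,
      smul_zero]
  | Nat.succ m =>
    rw [coeff_Jint_succ, coeff_smul, coeff_C_mul, coeff_C_mul, coeff_X_pow, coeff_X_pow]
    by_cases h : m = j
    · subst h; rw [if_pos rfl, if_pos rfl]
    · rw [if_neg h, if_neg (by omega), mul_zero, smul_zero, smul_zero]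

/-- Derivative of the exponential of a nilpotent polynomial curve. -/
lemma dexp {W : Polynomial S} {d M : ℕ} (hW : W ^ d = 0) (hdM : 2*d + 2 ≤ M) :
    derivative (texp M W) = texp M W *
      ∑ j ∈ range M, ((-1:ℝ)^j * (j.factorial : ℝ)⁻¹ * (((j+1 : ℕ)) : ℝ)⁻¹) •
        adIt W j (derivative W) := by
  have hdM' : d < M := by omega
  have hnW : (-W) ^ d = 0 := neg_pow_eq_zero hW
  have hM0 : 0 < M := by omega
  have hDsu : derivative (texp M (X * C W)) = C W * texp M (X * C W) := deriv_texp hW hdM'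
  have hcomm : C W * texp M (X * C (-W)) = texp M (X * C (-W)) * C W :=
    (commute_C_texp ((Commute.refl W).neg_right) M).eq
  have hDsG : derivative (texp M (X * C (-W)) * Dtl (texp M (X * C W)))
      = texp M (X * C (-W)) * C (derivative W) * texp M (X * C W) := by
    rw [derivative_mul, deriv_texp hnW hdM', ← Dtl_derivative, hDsu, Dtl_mul, Dtl_C, mul_add]
    simp only [map_neg] at hcomm ⊢
    rw [← mul_assoc (texp M (X * -C W)) (C W), ← hcomm]
    rw [neg_mul, neg_mul, ← mul_assoc (texp M (X * -C W)) (C (derivative W))]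
    abel
  have hG0 : (texp M (X * C (-W)) * Dtl (texp M (X * C W))).coeff 0 = 0 := by
    rw [mul_coeff_zero, Dtl_coeff, texp_XC_coeff_zero _ hM0, texp_XC_coeff_zero _ hM0,
      derivative_one, mul_zero]
  have hGJ : texp M (X * C (-W)) * Dtl (texp M (X * C W))
      = ∑ j ∈ range M, ((-1:ℝ)^j * (j.factorial : ℝ)⁻¹ * (((j+1:ℕ)):ℝ)⁻¹) •
          (C (adIt W j (derivative W)) * X ^ (j+1)) := by
    rw [eq_Jint_derivative hG0, hDsG, conj_texp (S := Polynomial S) hW hdM (derivative W),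
      Jint_sum]
    refine Finset.sum_congr rfl fun j _ => ?_
    rw [Jint_smul, Jint_C_mul_X_pow, smul_smul]
  have hev := congrArg (evalOne (S := Polynomial S)) hGJ
  rw [map_mul, evalOne_Dtl, evalOne_texp, evalOne_texp, map_mul, evalOne_X, evalOne_C, one_mul,
    map_mul, evalOne_X, evalOne_C, one_mul, map_sum] at hev
  have hev2 : ∀ j ∈ range M,
      evalOne (((-1:ℝ)^j * (j.factorial : ℝ)⁻¹ * (((j+1:ℕ)):ℝ)⁻¹) •
        (C (adIt W j (derivative W)) * X ^ (j+1)))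
      = ((-1:ℝ)^j * (j.factorial : ℝ)⁻¹ * (((j+1:ℕ)):ℝ)⁻¹) • adIt W j (derivative W) := by
    intro j _
    rw [evalOne_smul, map_mul, evalOne_C, map_pow, evalOne_X, one_pow, mul_one]
  rw [Finset.sum_congr rfl hev2] at hev
  have hinv : texp M W * texp M (-W) = 1 := texp_mul_texp_neg hW hdM'
  calc derivative (texp M W) = texp M W * texp M (-W) * derivative (texp M W) := by
        rw [hinv, one_mul]
    _ = texp M W * (texp M (-W) * derivative (texp M W)) := mul_assoc _ _ _
    _ = _ := by rw [hev]

end Dexp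

lemma sum_antidiag_swap {M : Type*} [AddCommMonoid M] (m : ℕ) (f : ℕ → ℕ → M) :
    ∑ ij ∈ Finset.HasAntidiagonal.antidiagonal m, f ij.1 ij.2 = ∑ ij ∈ Finset.HasAntidiagonal.antidiagonal m, f ij.2 ij.1 := by
  conv_rhs => rw [← Finset.HasAntidiagonal.map_swap_antidiagonal]
  rw [Finset.sum_map]
  rfl

section Core

variable (U : Submodule ℝ S)

/-- Span of products of `m` elements of `U`. -/
def Pg (m : ℕ) : Submodule ℝ S :=
  Submodule.span ℝ {z : S | ∃ l : List S, l.length = m ∧ (∀ w ∈ l, w ∈ U) ∧ z = l.prod}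

variable {U}

lemma pg_of_mem {a : S} (ha : a ∈ U) : a ∈ Pg U 1 :=
  Submodule.subset_span ⟨[a], rfl, by simpa using ha, by simp⟩

lemma pg_mul {i j : ℕ} {a b : S} (ha : a ∈ Pg U i) (hb : b ∈ Pg U j) :
    a * b ∈ Pg U (i + j) := by
  unfold Pg at ha hb
  refine mul_right_mem_span (fun u hu => ?_) ha
  obtain ⟨l₁, hlen₁, hmem₁, rfl⟩ := hu
  refine mul_left_mem_span (fun v hv => ?_) hb
  obtain ⟨l₂, hlen₂, hmem₂, rfl⟩ := hv
  refine Submodule.subset_span ⟨l₁ ++ l₂, by simp [hlen₁, hlen₂], ?_, (List.prod_append).symm⟩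
  intro w hw
  rcases List.mem_append.1 hw with h | h
  exacts [hmem₁ w h, hmem₂ w h]

lemma pg_bot {k : ℕ} (hk : ∀ l : List S, (∀ w ∈ l, w ∈ U) → k ≤ l.length → l.prod = 0)
    {m : ℕ} (hm : k ≤ m) {a : S} (ha : a ∈ Pg U m) : a = 0 := by
  have h : Pg U m ≤ ⊥ := by
    unfold Pg
    rw [Submodule.span_le]
    rintro z ⟨l, hlen, hmem, rfl⟩
    simp [hk l hmem (hlen ▸ hm)]
  simpa using h ha

lemma adIt_mem_U (hlie : ∀ a ∈ U, ∀ b ∈ U, a * b - b * a ∈ U)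
    {a z : S} (ha : a ∈ U) (hz : z ∈ U) (j : ℕ) : adIt a j z ∈ U := by
  induction j with
  | zero => exact hz
  | succ j ih => exact hlie a ha _ ih


lemma adIt_mem_Pg {a z : S} {c : ℕ} (ha : a ∈ U) (hz : z ∈ Pg U c) (j : ℕ) :
    adIt a j z ∈ Pg U (c + j) := by
  induction j with
  | zero => exact hz
  | succ j ih =>
    rw [adIt_succ]
    have h1 : a * adIt a j z ∈ Pg U (1 + (c + j)) := pg_mul (pg_of_mem ha) ih
    have h2 : adIt a j z * a ∈ Pg U ((c + j) + 1) := pg_mul ih (pg_of_mem ha)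
    rw [show 1 + (c + j) = c + (j+1) by omega] at h1
    rw [show (c + j) + 1 = c + (j+1) by omega] at h2
    exact sub_mem h1 h2

/-- Shifted goodness : coefficient `m` is in `U ⊓ Pg U (m+1)`. -/
def ShGood (U : Submodule ℝ S) (z : Polynomial S) : Prop :=
  ∀ m, z.coeff m ∈ U ⊓ Pg U (m + 1)

/-- Goodness for the unknown curve. -/
def GoodW (U : Submodule ℝ S) (p : Polynomial S) : Prop :=
  p.coeff 0 = 0 ∧ ∀ m, p.coeff m ∈ U ⊓ Pg U m

lemma shgood_bracket (hlie : ∀ a ∈ U, ∀ b ∈ U, a * b - b * a ∈ U)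
    {p z : Polynomial S} (hp : GoodW U p) (hz : ShGood U z) :
    ShGood U (p * z - z * p) := by
  intro m
  rw [coeff_sub, coeff_mul, coeff_mul,
    sum_antidiag_swap m (fun a b => z.coeff a * p.coeff b), ← Finset.sum_sub_distrib]
  refine Submodule.sum_mem _ fun ij hij => ?_
  rw [Finset.HasAntidiagonal.mem_antidiagonal] at hij
  rcases Nat.eq_zero_or_pos ij.1 with h0 | h0
  · rw [h0, hp.1, zero_mul, mul_zero, sub_zero]
    exact Submodule.zero_mem _
  · constructor
    · have h1 := (hp.2 ij.1).1
      have h2 := (hz ij.2).1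
      exact hlie _ h1 _ h2
    · have h1 := (hp.2 ij.1).2
      have h2 := (hz ij.2).2
      have hm1 : p.coeff ij.1 * z.coeff ij.2 ∈ Pg U (m + 1) := by
        have := pg_mul h1 h2
        rwa [show ij.1 + (ij.2 + 1) = m + 1 by omega] at this
      have hm2 : z.coeff ij.2 * p.coeff ij.1 ∈ Pg U (m + 1) := by
        have := pg_mul h2 h1
        rwa [show (ij.2 + 1) + ij.1 = m + 1 by omega] at this
      exact sub_mem hm1 hm2

lemma shgood_adIt (hlie : ∀ a ∈ U, ∀ b ∈ U, a * b - b * a ∈ U)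
    {p z : Polynomial S} (hp : GoodW U p) (hz : ShGood U z) (i : ℕ) :
    ShGood U (adIt p i z) := by
  induction i with
  | zero => exact hz
  | succ i ih => exact shgood_bracket hlie hp ih

lemma shgood_deriv {p : Polynomial S} (hp : GoodW U p) : ShGood U (derivative p) := by
  intro m
  rw [coeff_derivative, mul_cast_succ_eq_smul]
  exact Submodule.smul_mem _ _ (hp.2 (m+1))

variable (U) in
/-- The BCH fixed-point operator (before integration). -/
def RWop (L : Polynomial S) (M : ℕ) (p : Polynomial S) : Polynomial S :=
  (∑ j ∈ range M, ((-1:ℝ)^j * (j.factorial:ℝ)⁻¹) • adIt p j L)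
    - ∑ j ∈ range M, ((-1:ℝ)^(j+1) * ((j+1).factorial:ℝ)⁻¹ * (((j+1+1:ℕ)):ℝ)⁻¹) •
        adIt p (j+1) (derivative p)

/-- The BCH fixed-point operator. -/
def FFop (L : Polynomial S) (M : ℕ) (p : Polynomial S) : Polynomial S := Jint (RWop L M p)

lemma shgood_RW (hlie : ∀ a ∈ U, ∀ b ∈ U, a * b - b * a ∈ U) {L p : Polynomial S} {M : ℕ}
    (hL : ShGood U L) (hp : GoodW U p) : ShGood U (RWop L M p) := by
  intro m
  unfold RWop
  rw [coeff_sub]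
  refine sub_mem ?_ ?_
  · rw [finset_sum_coeff]
    refine Submodule.sum_mem _ fun i _ => ?_
    rw [coeff_smul]
    exact Submodule.smul_mem _ _ (shgood_adIt hlie hp hL i m)
  · rw [finset_sum_coeff]
    refine Submodule.sum_mem _ fun i _ => ?_
    rw [coeff_smul]
    exact Submodule.smul_mem _ _ (shgood_adIt hlie hp (shgood_deriv hp) (i+1) m)

lemma goodW_FF (hlie : ∀ a ∈ U, ∀ b ∈ U, a * b - b * a ∈ U) {L p : Polynomial S} {M : ℕ}
    (hL : ShGood U L) (hp : GoodW U p) : GoodW U (FFop L M p) := by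
  refine ⟨coeff_Jint_zero _, fun m => ?_⟩
  match m with
  | 0 =>
    rw [show (FFop L M p).coeff 0 = 0 from coeff_Jint_zero _]
    exact Submodule.zero_mem _
  | Nat.succ m =>
    rw [show (FFop L M p).coeff (m+1) = (((m+1:ℕ)):ℝ)⁻¹ • (RWop L M p).coeff m from
      coeff_Jint_succ _ m]
    exact Submodule.smul_mem _ _ (shgood_RW hlie hL hp m)

lemma agree_bracket {p q z z' : Polynomial S} {m : ℕ} (hp0 : p.coeff 0 = 0)
    (hq0 : q.coeff 0 = 0) (hpq : ∀ j ≤ m, p.coeff j = q.coeff j)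
    (hz : ∀ j < m, z.coeff j = z'.coeff j) :
    ∀ j ≤ m, (p * z - z * p).coeff j = (q * z' - z' * q).coeff j := by
  intro j hj
  rw [coeff_sub, coeff_sub, coeff_mul, coeff_mul, coeff_mul, coeff_mul]
  congr 1
  · refine Finset.sum_congr rfl fun ij hij => ?_
    rw [Finset.HasAntidiagonal.mem_antidiagonal] at hij
    rcases Nat.eq_zero_or_pos ij.1 with h0 | h0
    · rw [h0, hp0, hq0, zero_mul, zero_mul]
    · rw [hpq ij.1 (by omega), hz ij.2 (by omega)]
  · refine Finset.sum_congr rfl fun ij hij => ?_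
    rw [Finset.HasAntidiagonal.mem_antidiagonal] at hij
    rcases Nat.eq_zero_or_pos ij.2 with h0 | h0
    · rw [h0, hp0, hq0, mul_zero, mul_zero]
    · rw [hpq ij.2 (by omega), hz ij.1 (by omega)]

lemma agree_adIt {p q z z' : Polynomial S} {m : ℕ} (hp0 : p.coeff 0 = 0)
    (hq0 : q.coeff 0 = 0) (hpq : ∀ j ≤ m, p.coeff j = q.coeff j)
    (hz : ∀ j < m, z.coeff j = z'.coeff j) :
    ∀ i, ∀ j ≤ m, (adIt p (i+1) z).coeff j = (adIt q (i+1) z').coeff j := by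
  intro i
  induction i with
  | zero =>
    intro j hj
    rw [adIt_succ, adIt_succ, adIt_zero, adIt_zero]
    exact agree_bracket hp0 hq0 hpq hz j hj
  | succ i ih =>
    intro j hj
    rw [adIt_succ, adIt_succ]
    exact agree_bracket hp0 hq0 hpq (fun j' hj' => ih j' (by omega)) j hj

lemma agree_FF {L : Polynomial S} {M : ℕ} {p q : Polynomial S} {m : ℕ}
    (hp0 : p.coeff 0 = 0) (hq0 : q.coeff 0 = 0) (hpq : ∀ j ≤ m, p.coeff j = q.coeff j) :
    ∀ j ≤ m + 1, (FFop L M p).coeff j = (FFop L M q).coeff j := by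
  have hRW : ∀ j ≤ m, (RWop L M p).coeff j = (RWop L M q).coeff j := by
    intro j hj
    unfold RWop
    rw [coeff_sub, coeff_sub, finset_sum_coeff, finset_sum_coeff, finset_sum_coeff,
      finset_sum_coeff]
    congr 1
    · refine Finset.sum_congr rfl fun i _ => ?_
      rw [coeff_smul, coeff_smul]
      rcases Nat.eq_zero_or_pos i with rfl | hi
      · rfl
      · obtain ⟨i', rfl⟩ : ∃ i', i = i'+1 := ⟨i-1, by omega⟩
        rw [agree_adIt hp0 hq0 hpq (fun j' hj' => rfl) i' j hj]
    · refine Finset.sum_congr rfl fun i _ => ?_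
      have hd : ∀ j' < m, (derivative p).coeff j' = (derivative q).coeff j' := fun j' hj' => by
        rw [coeff_derivative, coeff_derivative, hpq (j'+1) (by omega)]
      rw [coeff_smul, coeff_smul, agree_adIt hp0 hq0 hpq hd i j hj]
  intro j hj
  match j with
  | 0 =>
    unfold FFop
    rw [coeff_Jint_zero, coeff_Jint_zero]
  | Nat.succ j =>
    unfold FFop
    rw [coeff_Jint_succ, coeff_Jint_succ, hRW j (by omega)]

lemma pg_one : (1 : S) ∈ Pg U 0 :=
  Submodule.subset_span ⟨[], rfl, by simp, by simp⟩

lemma low_mul {p q : Polynomial S} {i j : ℕ} (hp : ∀ m, m < i → p.coeff m = 0)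
    (hq : ∀ m, m < j → q.coeff m = 0) : ∀ m, m < i + j → (p * q).coeff m = 0 := by
  intro m hm
  rw [coeff_mul]
  refine Finset.sum_eq_zero fun ij hij => ?_
  rw [Finset.HasAntidiagonal.mem_antidiagonal] at hij
  rcases lt_or_ge ij.1 i with h | h
  · rw [hp ij.1 h, zero_mul]
  · rw [hq ij.2 (by omega), mul_zero]

lemma pgAll_mul {p q : Polynomial S} (hp : ∀ m, p.coeff m ∈ Pg U m)
    (hq : ∀ m, q.coeff m ∈ Pg U m) : ∀ m, (p * q).coeff m ∈ Pg U m := by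
  intro m
  rw [coeff_mul]
  refine Submodule.sum_mem _ fun ij hij => ?_
  rw [Finset.HasAntidiagonal.mem_antidiagonal] at hij
  have := pg_mul (hp ij.1) (hq ij.2)
  rwa [hij] at this

/-- The core nilpotent Baker–Campbell–Hausdorff theorem. -/
theorem bch_core (hlie : ∀ a ∈ U, ∀ b ∈ U, a * b - b * a ∈ U)
    {d : ℕ} (hd1 : 1 ≤ d)
    (hk : ∀ l : List S, (∀ w ∈ l, w ∈ U) → d ≤ l.length → l.prod = 0)
    (hd : ∀ a ∈ U, a ^ d = 0)
    {x y : S} (hx : x ∈ U) (hy : y ∈ U) :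
    ∃ z ∈ U, texp (2*d+2) x * texp (2*d+2) y = texp (2*d+2) z := by
  classical
  set M : ℕ := 2*d+2 with hMdef
  have hxd : x ^ d = 0 := hd x hx
  have hyd : y ^ d = 0 := hd y hy
  set L : Polynomial S :=
    C x + ∑ j ∈ range M, ((-1:ℝ)^j * (j.factorial:ℝ)⁻¹) • (C (adIt (-x) j y) * X ^ j)
    with hLdef
  -- derivative of the product curve
  have hDg : derivative (texp M (X * C x) * texp M (X * C y))
      = L * (texp M (X * C x) * texp M (X * C y)) := by
    have hnx : (-x) ^ d = 0 := neg_pow_eq_zero hxd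
    have hconv : texp M (X * C x) * C y
        = (∑ j ∈ range M, ((-1:ℝ)^j * (j.factorial:ℝ)⁻¹) • (C (adIt (-x) j y) * X ^ j))
            * texp M (X * C x) := by
      have h1 := conj_texp (w := -x) (M := M) hnx (by omega) y
      rw [neg_neg] at h1
      have h2 : texp M (X * C (-x)) * texp M (X * C x) = 1 := by
        have := texp_XC_mul_texp_XC_neg (w := -x) (M := M) hnx (by omega)
        rwa [neg_neg] at this
      calc texp M (X * C x) * C y
          = texp M (X * C x) * C y * (texp M (X * C (-x)) * texp M (X * C x)) := by
            rw [h2, mul_one]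
        _ = (texp M (X * C x) * C y * texp M (X * C (-x))) * texp M (X * C x) := by
            rw [mul_assoc (texp M (X * C x) * C y)]
        _ = _ := by rw [h1]
    rw [derivative_mul, deriv_texp hxd (by omega), deriv_texp hyd (by omega)]
    rw [← mul_assoc (texp M (X * C x)) (C y), hconv, hLdef, add_mul]
    rw [mul_assoc (C x), mul_assoc]
  -- coefficients of L
  have hLc : ∀ m, L.coeff m = (if m = 0 then x else 0)
      + (if m < M then ((-1:ℝ)^m * (m.factorial:ℝ)⁻¹) • adIt (-x) m y else 0) := by
    intro m
    rw [hLdef, coeff_add, coeff_C, finset_sum_coeff]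
    congr 1
    have h : ∀ j ∈ range M, (((-1:ℝ)^j * (j.factorial:ℝ)⁻¹) • (C (adIt (-x) j y) * X ^ j)).coeff m
        = if j = m then ((-1:ℝ)^j * (j.factorial:ℝ)⁻¹) • adIt (-x) j y else 0 := by
      intro j _
      rw [coeff_smul, coeff_C_mul, coeff_X_pow]
      by_cases h : j = m
      · subst h; rw [if_pos rfl, if_pos rfl, mul_one]
      · rw [if_neg (fun hh => h hh.symm), if_neg h, mul_zero, smul_zero]
    rw [Finset.sum_congr rfl h, Finset.sum_ite_eq' (range M) m]
    by_cases hm : m < M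
    · rw [if_pos (Finset.mem_range.2 hm), if_pos hm]
    · rw [if_neg (fun hc => hm (Finset.mem_range.1 hc)), if_neg hm]
  have hLS : ShGood U L := by
    intro m
    rw [hLc]
    refine add_mem ?_ ?_
    · split_ifs with h
      · subst h
        exact ⟨hx, pg_of_mem hx⟩
      · exact Submodule.zero_mem _
    · split_ifs with h
      · refine Submodule.smul_mem _ _ ⟨adIt_mem_U hlie (neg_mem hx) hy m, ?_⟩
        have := adIt_mem_Pg (neg_mem hx) (pg_of_mem hy) m
        rwa [Nat.add_comm 1 m] at this
      · exact Submodule.zero_mem _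
  -- the fixed point iteration
  have hGood : ∀ r, GoodW U ((FFop L M)^[r] 0) := by
    intro r
    induction r with
    | zero =>
      refine ⟨rfl, fun m => ?_⟩
      simp only [Function.iterate_zero_apply, coeff_zero]
      exact Submodule.zero_mem _
    | succ r ih =>
      rw [Function.iterate_succ_apply']
      exact goodW_FF hlie hLS ih
  have hvanish : ∀ r m, d ≤ m → ((FFop L M)^[r] 0).coeff m = 0 :=
    fun r m hm => pg_bot hk hm ((hGood r).2 m).2
  have hstab : ∀ r, ∀ j ≤ r, ((FFop L M)^[r] 0).coeff j = ((FFop L M)^[r+1] 0).coeff j := by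
    intro r
    induction r with
    | zero =>
      intro j hj
      rw [Nat.le_zero.1 hj, Function.iterate_zero_apply, coeff_zero, (hGood 1).1]
    | succ r ih =>
      intro j hj
      rw [Function.iterate_succ_apply' (FFop L M) r, Function.iterate_succ_apply' (FFop L M) (r+1)]
      exact agree_FF (hGood r).1 (hGood (r+1)).1 ih j hj
  have hfix : FFop L M ((FFop L M)^[d+2] 0) = (FFop L M)^[d+2] 0 := by
    refine Polynomial.ext fun m => ?_
    rw [← Function.iterate_succ_apply' (FFop L M) (d+2)]
    rcases le_or_gt m (d+2) with hm | hm
    · exact (hstab (d+2) m hm).symm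
    · rw [hvanish (d+3) m (by omega), hvanish (d+2) m (by omega)]
  have hW0 : ((FFop L M)^[d+2] 0).coeff 0 = 0 := (hGood (d+2)).1
  have hWderiv : derivative ((FFop L M)^[d+2] 0) = RWop L M ((FFop L M)^[d+2] 0) := by
    conv_lhs => rw [← hfix]
    exact derivative_Jint _
  -- nilpotency of W
  have hWd : ((FFop L M)^[d+2] 0) ^ d = 0 := by
    have hlow : ∀ i : ℕ, ∀ m, m < i → (((FFop L M)^[d+2] 0) ^ i).coeff m = 0 := by
      intro i
      induction i with
      | zero => intro m hm; omega
      | succ i ih =>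
        intro m hm
        rw [pow_succ]
        refine low_mul (j := 1) ih (fun m' hm' => ?_) m (by omega)
        rw [Nat.lt_one_iff.1 hm', hW0]
    have hpg : ∀ i : ℕ, ∀ m, (((FFop L M)^[d+2] 0) ^ i).coeff m ∈ Pg U m := by
      intro i
      induction i with
      | zero =>
        intro m
        rw [pow_zero, coeff_one]
        split_ifs with h
        · subst h; exact pg_one
        · exact Submodule.zero_mem _
      | succ i ih =>
        intro m
        rw [pow_succ]
        exact pgAll_mul ih (fun m' => ((hGood (d+2)).2 m').2) m
    refine Polynomial.ext fun m => ?_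
    rw [coeff_zero]
    rcases lt_or_ge m d with hm | hm
    · exact hlow d m hm
    · exact pg_bot hk hm (hpg d m)
  -- the differential equation for `texp M W`
  have hdexp := dexp (S := S) (M := M) hWd (by omega)
  have hsum : (∑ j ∈ range M, ((-1:ℝ)^j * (j.factorial : ℝ)⁻¹ * (((j+1 : ℕ)) : ℝ)⁻¹) •
        adIt ((FFop L M)^[d+2] 0) j (derivative ((FFop L M)^[d+2] 0)))
      = ∑ j ∈ range M, ((-1:ℝ)^j * (j.factorial:ℝ)⁻¹) • adIt ((FFop L M)^[d+2] 0) j L := by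
    have hsplit : (∑ j ∈ range M, ((-1:ℝ)^j * (j.factorial : ℝ)⁻¹ * (((j+1 : ℕ)) : ℝ)⁻¹) •
          adIt ((FFop L M)^[d+2] 0) j (derivative ((FFop L M)^[d+2] 0)))
        = derivative ((FFop L M)^[d+2] 0)
          + ∑ j ∈ range M, ((-1:ℝ)^(j+1) * ((j+1).factorial:ℝ)⁻¹ * (((j+1+1:ℕ)):ℝ)⁻¹) •
              adIt ((FFop L M)^[d+2] 0) (j+1) (derivative ((FFop L M)^[d+2] 0)) := by
      rw [show M = (2*d+1)+1 from by omega]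
      rw [Finset.sum_range_succ' (fun j => ((-1:ℝ)^j * (j.factorial : ℝ)⁻¹ * (((j+1 : ℕ)) : ℝ)⁻¹) •
        adIt ((FFop L M)^[d+2] 0) j (derivative ((FFop L M)^[d+2] 0))) (2*d+1)]
      rw [Finset.sum_range_succ (fun j => ((-1:ℝ)^(j+1) * ((j+1).factorial:ℝ)⁻¹ * (((j+1+1:ℕ)):ℝ)⁻¹) •
        adIt ((FFop L M)^[d+2] 0) (j+1) (derivative ((FFop L M)^[d+2] 0))) (2*d+1)]
      rw [adIt_eq_zero hWd _ (show 2*d ≤ (2*d+1) + 1 + 1 by omega), smul_zero, add_zero]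
      rw [show ((-1:ℝ)^0 * ((Nat.factorial 0): ℝ)⁻¹ * (((0+1 : ℕ)) : ℝ)⁻¹) •
          adIt ((FFop L M)^[d+2] 0) 0 (derivative ((FFop L M)^[d+2] 0))
          = derivative ((FFop L M)^[d+2] 0) from by norm_num [adIt_zero]]
      rw [add_comm]
    rw [hsplit]
    nth_rewrite 1 [hWderiv]
    unfold RWop
    rw [sub_add_cancel]
  have hODEW : derivative (texp M ((FFop L M)^[d+2] 0))
      = L * texp M ((FFop L M)^[d+2] 0) := by
    rw [hdexp, hsum, ← conj_texp' (w := (FFop L M)^[d+2] 0) hWd (by omega) L]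
    rw [← mul_assoc, ← mul_assoc, texp_mul_texp_neg hWd (by omega), one_mul]
  have hg0 : (texp M (X * C x) * texp M (X * C y)).coeff 0 = 1 := by
    rw [mul_coeff_zero, texp_XC_coeff_zero _ (by omega), texp_XC_coeff_zero _ (by omega),
      one_mul]
  have hW00 : (texp M ((FFop L M)^[d+2] 0)).coeff 0 = 1 := by
    rw [texp, finset_sum_coeff]
    have h : ∀ i ∈ range M, ((i.factorial:ℝ)⁻¹ • ((FFop L M)^[d+2] 0) ^ i).coeff 0
        = if i = 0 then 1 else 0 := by
      intro i _
      rw [coeff_smul, ← constantCoeff_apply, map_pow, constantCoeff_apply, hW0]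
      by_cases h : i = 0
      · subst h; norm_num
      · rw [zero_pow h, smul_zero, if_neg h]
    rw [Finset.sum_congr rfl h, Finset.sum_ite_eq' (range M) 0 (fun _ => (1:S)),
      if_pos (Finset.mem_range.2 (by omega))]
  have huniq : texp M ((FFop L M)^[d+2] 0) = texp M (X * C x) * texp M (X * C y) := by
    refine poly_unique (fun p => L * p) ?_ hODEW hDg (by rw [hW00, hg0])
    intro p q m hpq
    rw [coeff_mul, coeff_mul]
    refine Finset.sum_congr rfl fun ij hij => ?_
    rw [Finset.HasAntidiagonal.mem_antidiagonal] at hij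
    rw [hpq ij.2 (by omega)]
  refine ⟨evalOne ((FFop L M)^[d+2] 0), ?_, ?_⟩
  · have h1 : evalOne ((FFop L M)^[d+2] 0)
        = ∑ m ∈ ((FFop L M)^[d+2] 0).support, ((FFop L M)^[d+2] 0).coeff m := by
      rw [show (evalOne (S := S)) ((FFop L M)^[d+2] 0)
          = eval₂ (RingHom.id S) 1 ((FFop L M)^[d+2] 0) from rfl, eval₂_eq_sum,
        Polynomial.sum]
      exact Finset.sum_congr rfl fun m _ => by simp
    rw [h1]
    exact Submodule.sum_mem _ fun m _ => ((hGood (d+2)).2 m).1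
  · have hev := congrArg (evalOne (S := S)) huniq
    rw [evalOne_texp, map_mul, evalOne_texp, evalOne_texp, map_mul, evalOne_X, evalOne_C,
      one_mul, map_mul, evalOne_X, evalOne_C, one_mul] at hev
    exact hev.symm

end Core

end BCH

noncomputable section MatrixPart

open Polynomial Finset

lemma engel_products {n : ℕ} (𝔲 : LieSubalgebra ℝ (Matrix (Fin n) (Fin n) ℝ))
    (hnil : ∀ X ∈ 𝔲, X ^ n = 0) :
    ∃ k : ℕ, ∀ l : List (Matrix (Fin n) (Fin n) ℝ),
      (∀ w ∈ l, w ∈ 𝔲) → k ≤ l.length → l.prod = 0 := by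
  letI : LieRingModule 𝔲 (Fin n → ℝ) :=
    { bracket := fun X v => (X : Matrix (Fin n) (Fin n) ℝ).mulVec v
      add_lie := fun x y m => by
        show ((x + y : 𝔲) : Matrix (Fin n) (Fin n) ℝ).mulVec m = _
        rw [show ((x + y : 𝔲) : Matrix (Fin n) (Fin n) ℝ)
            = (x : Matrix (Fin n) (Fin n) ℝ) + (y : Matrix (Fin n) (Fin n) ℝ) from rfl,
          Matrix.add_mulVec]
      lie_add := fun x m₁ m₂ => Matrix.mulVec_add _ _ _
      leibniz_lie := fun x y m => by
        show (x : Matrix (Fin n) (Fin n) ℝ).mulVec ((y : Matrix (Fin n) (Fin n) ℝ).mulVec m) = _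
        show _ = ((⁅x, y⁆ : 𝔲) : Matrix (Fin n) (Fin n) ℝ).mulVec m
          + (y : Matrix (Fin n) (Fin n) ℝ).mulVec ((x : Matrix (Fin n) (Fin n) ℝ).mulVec m)
        rw [LieSubalgebra.coe_bracket, Ring.lie_def, Matrix.sub_mulVec, Matrix.mulVec_mulVec,
          Matrix.mulVec_mulVec]
        abel }
  letI : LieModule ℝ 𝔲 (Fin n → ℝ) :=
    { smul_lie := fun r x m => by
        show ((r • x : 𝔲) : Matrix (Fin n) (Fin n) ℝ).mulVec m = _
        rw [show ((r • x : 𝔲) : Matrix (Fin n) (Fin n) ℝ)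
            = r • (x : Matrix (Fin n) (Fin n) ℝ) from rfl,
          Matrix.smul_mulVec]; rfl
      lie_smul := fun r x m => Matrix.mulVec_smul _ _ _ }
  have hnilend : ∀ x : 𝔲, IsNilpotent (LieModule.toEnd ℝ 𝔲 (Fin n → ℝ) x) := by
    intro x
    refine ⟨n, LinearMap.ext fun v => ?_⟩
    have hpow : ∀ (j : ℕ) (v : Fin n → ℝ), ((LieModule.toEnd ℝ 𝔲 (Fin n → ℝ) x) ^ j) v
        = ((x : Matrix (Fin n) (Fin n) ℝ) ^ j).mulVec v := by
      intro j
      induction j with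
      | zero => intro v; simp [Matrix.one_mulVec]
      | succ j ih =>
        intro v
        rw [pow_succ, Module.End.mul_apply, pow_succ, ← Matrix.mulVec_mulVec, ← ih]
        rfl
    rw [LinearMap.zero_apply, hpow, hnil _ x.2, Matrix.zero_mulVec]
  have hEng := LieAlgebra.isEngelian_of_isNoetherian (R := ℝ) (L := 𝔲) (Fin n → ℝ) hnilend
  obtain ⟨k, hk⟩ := (LieModule.isNilpotent_iff ℝ 𝔲 (Fin n → ℝ)).mp hEng
  refine ⟨k, fun l hl hlen => ?_⟩
  have hmem : ∀ (l : List (Matrix (Fin n) (Fin n) ℝ)), (∀ w ∈ l, w ∈ 𝔲) → ∀ v : Fin n → ℝ,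
      l.prod.mulVec v ∈ LieModule.lowerCentralSeries ℝ 𝔲 (Fin n → ℝ) l.length := by
    intro l
    induction l with
    | nil => intro _ v; simp [Matrix.one_mulVec]
    | cons a l ih =>
      intro hal v
      have ha : a ∈ 𝔲 := hal a (List.mem_cons_self (a := a) (l := l))
      have hprev := ih (fun w hw => hal w (List.mem_cons_of_mem a hw)) v
      rw [List.prod_cons, ← Matrix.mulVec_mulVec, List.length_cons,
        LieModule.lowerCentralSeries_succ]
      exact LieSubmodule.lie_mem_lie (LieSubmodule.mem_top (⟨a, ha⟩ : 𝔲)) hprev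
  have hzero : ∀ v : Fin n → ℝ, l.prod.mulVec v = 0 := by
    intro v
    have h1 := hmem l hl v
    have h2 : LieModule.lowerCentralSeries ℝ 𝔲 (Fin n → ℝ) l.length ≤
        LieModule.lowerCentralSeries ℝ 𝔲 (Fin n → ℝ) k :=
      LieModule.antitone_lowerCentralSeries ℝ 𝔲 (Fin n → ℝ) hlen
    rw [hk] at h2
    simpa using h2 h1
  ext i j
  have h := congrFun (hzero (Pi.single j 1)) i
  simpa [Matrix.mulVec_single] using h


lemma exp_eq_texp {n : ℕ} {a : Matrix (Fin n) (Fin n) ℝ} {d M : ℕ} (ha : a ^ d = 0)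
    (hdM : d ≤ M) : NormedSpace.exp a = texp M a := by
  have h : NormedSpace.exp a = ∑' i : ℕ, (i.factorial : ℝ)⁻¹ • a ^ i := by
    rw [NormedSpace.exp_eq_tsum (𝕂 := ℝ)]
  rw [h]
  exact tsum_eq_sum (fun i hi => by
    rw [pow_eq_zero_of_le (le_trans hdM (by simpa using hi)) ha, smul_zero])

lemma matrix_bch {n : ℕ} (𝔲 : LieSubalgebra ℝ (Matrix (Fin n) (Fin n) ℝ))
    (hnil : ∀ X ∈ 𝔲, X ^ n = 0) {x y : Matrix (Fin n) (Fin n) ℝ}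
    (hx : x ∈ 𝔲) (hy : y ∈ 𝔲) :
    ∃ z ∈ 𝔲, NormedSpace.exp x * NormedSpace.exp y = NormedSpace.exp z := by
  obtain ⟨k, hk⟩ := engel_products 𝔲 hnil
  have hd1 : 1 ≤ n + k + 1 := by omega
  have hdpow : ∀ a ∈ 𝔲.toSubmodule, a ^ (n + k + 1) = 0 := fun a ha =>
    pow_eq_zero_of_le (by omega) (hnil a ha)
  have hk' : ∀ l : List (Matrix (Fin n) (Fin n) ℝ), (∀ w ∈ l, w ∈ 𝔲.toSubmodule) →
      n + k + 1 ≤ l.length → l.prod = 0 := fun l hl hlen => hk l hl (by omega)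
  have hlie : ∀ a ∈ 𝔲.toSubmodule, ∀ b ∈ 𝔲.toSubmodule, a * b - b * a ∈ 𝔲.toSubmodule := by
    intro a ha b hb
    have := 𝔲.lie_mem ha hb
    rwa [Ring.lie_def] at this
  obtain ⟨z, hz, hzeq⟩ := bch_core (U := 𝔲.toSubmodule) hlie hd1 hk' hdpow hx hy
  refine ⟨z, hz, ?_⟩
  rw [exp_eq_texp (M := 2*(n+k+1)+2) (hdpow x hx) (by omega),
    exp_eq_texp (M := 2*(n+k+1)+2) (hdpow y hy) (by omega),
    exp_eq_texp (M := 2*(n+k+1)+2) (hdpow z hz) (by omega)]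
  exact hzeq

lemma exp_mul_exp_neg {n : ℕ} {x : Matrix (Fin n) (Fin n) ℝ} {d : ℕ} (hx : x ^ d = 0) :
    NormedSpace.exp x * NormedSpace.exp (-x) = 1 := by
  have hnx : (-x) ^ d = 0 := neg_pow_eq_zero hx
  rw [exp_eq_texp (M := d+1) hx (by omega), exp_eq_texp (M := d+1) hnx (by omega)]
  exact texp_mul_texp_neg hx (by omega)

lemma exp_sub_one_pow {n : ℕ} {Z : Matrix (Fin n) (Fin n) ℝ} (hZ : Z ^ n = 0) :
    (NormedSpace.exp Z - 1) ^ n = 0 := by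
  have hexp : NormedSpace.exp Z = texp (n+1) Z := exp_eq_texp hZ (by omega)
  have hB : NormedSpace.exp Z - 1
      = Z * ∑ i ∈ range n, (((i+1).factorial : ℝ))⁻¹ • Z ^ i := by
    rw [hexp, texp, Finset.sum_range_succ' (fun i => ((i.factorial : ℝ))⁻¹ • Z ^ i) n]
    simp only [Nat.factorial_zero, Nat.cast_one, inv_one, pow_zero, one_smul]
    rw [add_sub_cancel_right, Finset.mul_sum]
    refine Finset.sum_congr rfl fun i _ => ?_
    rw [mul_smul_comm, pow_succ']
  rw [hB, (Commute.sum_right _ _ _ fun i _ =>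
    ((Commute.refl Z).pow_right i).smul_right _).mul_pow, hZ, zero_mul]

end MatrixPart

/-- If `N` is the connected Lie subgroup of `GL(n,ℝ)` whose Lie algebra `𝔲` consists
of nilpotent matrices (so `N` is generated by the exponentials of elements of `𝔲`),
then every element of `N` is unipotent and the exponential map `𝔲 → N` is
surjective. -/
theorem unipotent_group_of_nilpotent_algebra {n : ℕ}
    (𝔲 : LieSubalgebra ℝ (Matrix (Fin n) (Fin n) ℝ))
    (hnil : ∀ X ∈ 𝔲, X ^ n = 0) :
    let N : Subgroup (GL (Fin n) ℝ) :=
      Subgroup.closure {u : GL (Fin n) ℝ | ∃ X ∈ 𝔲,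
        (u : Matrix (Fin n) (Fin n) ℝ) = NormedSpace.exp X}
    (∀ u ∈ N, ((u : Matrix (Fin n) (Fin n) ℝ) - 1) ^ n = 0) ∧
      ∀ u ∈ N, ∃ X ∈ 𝔲, (u : Matrix (Fin n) (Fin n) ℝ) = NormedSpace.exp X := by
  intro N
  have key : ∀ u ∈ N, ∃ X ∈ 𝔲, (u : Matrix (Fin n) (Fin n) ℝ) = NormedSpace.exp X := by
    intro u hu
    induction hu using Subgroup.closure_induction with
    | mem v hv => exact hv
    | one =>
      refine ⟨0, zero_mem 𝔲, ?_⟩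
      have h0 : NormedSpace.exp (0 : Matrix (Fin n) (Fin n) ℝ) = 1 := by
        rw [exp_eq_texp (d := 1) (M := 1) (by rw [pow_one]) (le_refl 1)]
        simp [texp]
      rw [h0, Units.val_one]
    | mul u v hu hv ihu ihv =>
      obtain ⟨Xu, hXu, hXu2⟩ := ihu
      obtain ⟨Xv, hXv, hXv2⟩ := ihv
      obtain ⟨Z, hZ, hZ2⟩ := matrix_bch 𝔲 hnil hXu hXv
      exact ⟨Z, hZ, by rw [Units.val_mul, hXu2, hXv2, hZ2]⟩
    | inv u hu ihu =>
      obtain ⟨Xu, hXu, hXu2⟩ := ihu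
      refine ⟨-Xu, neg_mem hXu, ?_⟩
      have h1 : NormedSpace.exp Xu * NormedSpace.exp (-Xu) = 1 :=
        exp_mul_exp_neg (hnil Xu hXu)
      calc (↑u⁻¹ : Matrix (Fin n) (Fin n) ℝ)
          = ↑u⁻¹ * (NormedSpace.exp Xu * NormedSpace.exp (-Xu)) := by rw [h1, mul_one]
        _ = (↑u⁻¹ * ↑u) * NormedSpace.exp (-Xu) := by rw [← hXu2, ← mul_assoc]
        _ = NormedSpace.exp (-Xu) := by rw [Units.inv_mul, one_mul]
  refine ⟨?_, key⟩
  intro u hu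
  obtain ⟨Z, hZ, hZ2⟩ := key u hu
  rw [hZ2]
  exact exp_sub_one_pow (hnil Z hZ)
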